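/- Let s, t, a be integers with 2 ≤ a ≤ s ≤ t and a(s + t - a - 2) ≥ 1. Then there exists a natural number n₀ such that for all n ≥ n₀, r(K_{n,n}, K_{s,t}, st - a(s + t - a - 2) + 1) ≥ (n/(t-1))^{1/a}. -/

import Mathlib

open Finset

/-- `rBip n s t q` is the bipartite Erdős–Gyárfás function `r(K_{n,n}, K_{s,t}, q)`:
the minimum number of colors in an edge-coloring of `K_{n,n}` such that every copy of
`K_{s,t}` (with its part of size `s` in either side of the bipartition) receives at
least `q` distinct colors on its edges. -/
noncomputable def rBip (n s t q : ℕ) : ℕ :=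
  sInf {k : ℕ | ∃ c : Fin n → Fin n → ℕ,
    (∀ a b, c a b < k) ∧
    ∀ A B : Finset (Fin n),
      (A.card = s ∧ B.card = t) ∨ (A.card = t ∧ B.card = s) →
      q ≤ ((A ×ˢ B).image fun p => c p.1 p.2).card}

/-- For `2 ≤ a ≤ s ≤ t` with `a(s + t - a - 2) ≥ 1`,
`r(K_{n,n}, K_{s,t}, st - a(s+t-a-2) + 1) ≥ (n/(t-1))^{1/a}` for large `n`. -/

lemma nat_identity (s t a : ℕ) (ha : 2 ≤ a) (has : a ≤ s) (hst : s ≤ t) :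
    s * t - a * (s + t - a - 2) = 2 * a + (s - a) * (t - a) := by
  obtain ⟨b, rfl⟩ : ∃ b, a = 2 + b := ⟨a - 2, by omega⟩
  obtain ⟨u, rfl⟩ : ∃ u, s = (2 + b) + u := ⟨s - (2+b), by omega⟩
  obtain ⟨v, rfl⟩ : ∃ v, t = (2 + b) + u + v := ⟨t - ((2+b)+u), by omega⟩
  have h1 : (2+b) + u + ((2+b)+u+v) - (2+b) - 2 = b + 2*u + v := by omega
  have h2 : ((2+b)+u+v) - (2+b) = u + v := by omega
  have h3 : ((2+b)+u) - (2+b) = u := by omega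
  rw [h1, h2, h3]
  have : ((2+b)+u) * ((2+b)+u+v) = (2+b)*(b+2*u+v) + (2*(2+b) + u*(u+v)) := by ring
  omega

lemma key (s t a n k : ℕ) (ha : 2 ≤ a) (has : a ≤ s) (hst : s ≤ t)
    (hn : a * (t - 1) < n)
    (c : Fin n → Fin n → ℕ) (hck : ∀ i j, c i j < k)
    (hcol : ∀ A B : Finset (Fin n),
      (A.card = s ∧ B.card = t) ∨ (A.card = t ∧ B.card = s) →
      s * t - a * (s + t - a - 2) + 1 ≤ ((A ×ˢ B).image fun p => c p.1 p.2).card) :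
    n ≤ (t - 1) * k ^ a := by
  by_contra hbig
  have hKn : (t - 1) * k ^ a < n := Nat.lt_of_not_le hbig
  have hna : a < n := lt_of_le_of_lt (Nat.le_mul_of_pos_right a (by omega)) hn
  have hn0 : 0 < n := by omega
  have hk1 : 1 ≤ k := by
    have := hck ⟨0, hn0⟩ ⟨0, hn0⟩; omega
  have hnt : t ≤ n := by
    have h2t : 2 * (t - 1) ≤ a * (t-1) := Nat.mul_le_mul_right _ ha
    omega
  -- choose A₀ ⊆ left of size a
  obtain ⟨A₀, -, hA₀⟩ := exists_subset_card_eq (show a ≤ (univ : Finset (Fin n)).card by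
    simpa using hna.le)
  have hA₀' : Fintype.card A₀ = a := by rw [Fintype.card_coe, hA₀]
  have hKa : Fintype.card (A₀ → Fin k) = k ^ a := by
    rw [Fintype.card_fun, Fintype.card_fin, hA₀']
  set f : Fin n → (A₀ → Fin k) := fun b v => ⟨c v.1 b, hck _ _⟩ with hf
  obtain ⟨y, -, hy⟩ := exists_lt_card_fiber_of_mul_lt_card_of_maps_to
    (t := (univ : Finset (A₀ → Fin k))) (f := f) (s := (univ : Finset (Fin n)))
    (n := t - 1) (fun _ _ => mem_univ _)
    (by rw [card_univ, card_univ, hKa, Fintype.card_fin, Nat.mul_comm]; exact hKn)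
  obtain ⟨B, hBsub, hB⟩ := exists_subset_card_eq (show t ≤ #{x ∈ univ | f x = y} by omega)
  have hBy : ∀ b ∈ B, f b = y := fun b hb => (mem_filter.1 (hBsub hb)).2
  -- choose B₀ ⊆ B of size a
  obtain ⟨B₀, hB₀sub, hB₀⟩ := exists_subset_card_eq (show a ≤ B.card by omega)
  have hB₀' : Fintype.card B₀ = a := by rw [Fintype.card_coe, hB₀]
  have hKa' : Fintype.card (B₀ → Fin k) = k ^ a := by
    rw [Fintype.card_fun, Fintype.card_fin, hB₀']
  set g : Fin n → (B₀ → Fin k) := fun v w => ⟨c v w.1, hck _ _⟩ with hg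
  -- find C of size s - a outside A₀ with constant g
  have hfiber : ∃ z : B₀ → Fin k, ∃ C ⊆ univ \ A₀, C.card = s - a ∧ ∀ v ∈ C, g v = z := by
    rcases eq_or_lt_of_le has with h | h
    · exact ⟨fun _ => ⟨0, hk1⟩, ∅, empty_subset _, by rw [card_empty]; omega, fun v hv => absurd hv (notMem_empty v)⟩
    · have hcards : (univ \ A₀ : Finset (Fin n)).card = n - a := by
        rw [card_sdiff_of_subset (subset_univ _), card_univ, Fintype.card_fin, hA₀]
      have hlt : k ^ a * (s - a - 1) < n - a := by
        rcases eq_or_lt_of_le hk1 with hk | hk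
        · have h1 : k ^ a = 1 := by rw [← hk]; simp
          rw [h1, one_mul]
          rw [h1, Nat.mul_one] at hKn
          omega
        · have hak : a < k ^ a :=
            lt_of_lt_of_le (Nat.lt_two_pow_self (n := a)) (Nat.pow_le_pow_left hk a)
          have : k ^ a * (s - a - 1) + k ^ a = k ^ a * (s - a) := by
            rw [← Nat.mul_succ]; congr 1; omega
          have h2 : k ^ a * (s - a) ≤ k ^ a * (t - 1) := Nat.mul_le_mul_left _ (by omega)
          have hKn' : k ^ a * (t - 1) < n := by rw [Nat.mul_comm]; exact hKn
          omega
      obtain ⟨z, -, hz⟩ := exists_lt_card_fiber_of_mul_lt_card_of_maps_to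
        (t := (univ : Finset (B₀ → Fin k))) (f := g) (s := univ \ A₀)
        (n := s - a - 1) (fun _ _ => mem_univ _)
        (by rw [card_univ, hKa', hcards]; exact hlt)
      obtain ⟨C, hCsub, hC⟩ := exists_subset_card_eq
        (show s - a ≤ #{x ∈ univ \ A₀ | g x = z} by omega)
      exact ⟨z, C, hCsub.trans (filter_subset _ _), hC,
        fun v hv => (mem_filter.1 (hCsub hv)).2⟩
  obtain ⟨z, C, hCsub, hC, hCz⟩ := hfiber
  have hdisj : Disjoint A₀ C := by
    rw [disjoint_comm]
    exact disjoint_of_subset_left hCsub sdiff_disjoint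
  set A : Finset (Fin n) := A₀ ∪ C with hA
  have hAcard : A.card = s := by
    rw [hA, card_union_of_disjoint hdisj, hA₀, hC]; omega
  have hq := hcol A B (Or.inl ⟨hAcard, hB⟩)
  -- now bound the number of colors
  have hsplit : A ×ˢ B = (A₀ ×ˢ B) ∪ ((C ×ˢ B₀) ∪ (C ×ˢ (B \ B₀))) := by
    rw [hA, union_product, ← product_union, union_sdiff_of_subset hB₀sub]
  have hb1 : ((A₀ ×ˢ B).image fun p => c p.1 p.2).card ≤ a := by
    calc ((A₀ ×ˢ B).image fun p => c p.1 p.2).card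
        ≤ (A₀.attach.image fun v => (y v : ℕ)).card := by
          apply card_le_card
          intro x hx
          obtain ⟨p, hp, rfl⟩ := mem_image.1 hx
          obtain ⟨hp1, hp2⟩ := mem_product.1 hp
          have : c p.1 p.2 = (y ⟨p.1, hp1⟩ : ℕ) := by
            have := hBy p.2 hp2
            have h2 := congrFun this ⟨p.1, hp1⟩
            rw [hf] at h2
            exact congrArg Fin.val h2
          rw [this]
          exact mem_image_of_mem _ (mem_attach _ _)
      _ ≤ A₀.attach.card := card_image_le
      _ = a := by rw [card_attach, hA₀]
  have hb2 : ((C ×ˢ B₀).image fun p => c p.1 p.2).card ≤ a := by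
    calc ((C ×ˢ B₀).image fun p => c p.1 p.2).card
        ≤ (B₀.attach.image fun w => (z w : ℕ)).card := by
          apply card_le_card
          intro x hx
          obtain ⟨p, hp, rfl⟩ := mem_image.1 hx
          obtain ⟨hp1, hp2⟩ := mem_product.1 hp
          have : c p.1 p.2 = (z ⟨p.2, hp2⟩ : ℕ) := by
            have := hCz p.1 hp1
            have h2 := congrFun this ⟨p.2, hp2⟩
            rw [hg] at h2
            exact congrArg Fin.val h2
          rw [this]
          exact mem_image_of_mem _ (mem_attach _ _)
      _ ≤ B₀.attach.card := card_image_le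
      _ = a := by rw [card_attach, hB₀]
  have hb3 : ((C ×ˢ (B \ B₀)).image fun p => c p.1 p.2).card ≤ (s - a) * (t - a) :=
    le_trans card_image_le (by
      rw [card_product, hC, card_sdiff_of_subset hB₀sub, hB, hB₀])
  have htotal : ((A ×ˢ B).image fun p => c p.1 p.2).card ≤ 2 * a + (s - a) * (t - a) := by
    rw [hsplit, image_union, image_union]
    calc _ ≤ ((A₀ ×ˢ B).image fun p => c p.1 p.2).card
            + (((C ×ˢ B₀).image fun p => c p.1 p.2) ∪ ((C ×ˢ (B \ B₀)).image fun p => c p.1 p.2)).card := card_union_le _ _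
      _ ≤ ((A₀ ×ˢ B).image fun p => c p.1 p.2).card
            + (((C ×ˢ B₀).image fun p => c p.1 p.2).card + ((C ×ˢ (B \ B₀)).image fun p => c p.1 p.2).card) := by
          exact Nat.add_le_add_left (card_union_le _ _) _
      _ ≤ 2 * a + (s - a) * (t - a) := by omega
  have hid := nat_identity s t a ha has hst
  omega

theorem stmt_17' (s t a : ℕ) (ha : 2 ≤ a) (has : a ≤ s) (hst : s ≤ t)
    (hprod : 1 ≤ a * (s + t - a - 2))
    (key : ∀ (n k : ℕ), a * (t - 1) < n →
      ∀ c : Fin n → Fin n → ℕ, (∀ i j, c i j < k) →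
      (∀ A B : Finset (Fin n),
        (A.card = s ∧ B.card = t) ∨ (A.card = t ∧ B.card = s) →
        s * t - a * (s + t - a - 2) + 1 ≤ ((A ×ˢ B).image fun p => c p.1 p.2).card) →
      n ≤ (t - 1) * k ^ a) :
    ∃ n₀ : ℕ, ∀ n : ℕ, n₀ ≤ n →
      ((n : ℝ) / ((t : ℝ) - 1)) ^ ((1 : ℝ) / (a : ℝ)) ≤
        (rBip n s t (s * t - a * (s + t - a - 2) + 1) : ℝ) := by
  refine ⟨a * (t - 1) + 1, fun n hn => ?_⟩
  have ht2 : 2 ≤ t := le_trans ha (has.trans hst)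
  have hn' : a * (t - 1) < n := by omega
  have hn0 : 0 < n := by omega
  set q := s * t - a * (s + t - a - 2) + 1 with hq
  have hne : {k : ℕ | ∃ c : Fin n → Fin n → ℕ,
      (∀ a b, c a b < k) ∧
      ∀ A B : Finset (Fin n),
        (A.card = s ∧ B.card = t) ∨ (A.card = t ∧ B.card = s) →
        q ≤ ((A ×ˢ B).image fun p => c p.1 p.2).card}.Nonempty := by
    refine ⟨n * n, fun i j => i.1 + n * j.1, fun i j => ?_, fun A B hAB => ?_⟩
    · have h1 : i.1 + n * j.1 < n * (j.1 + 1) := by rw [Nat.mul_succ]; omega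
      exact lt_of_lt_of_le h1 (Nat.mul_le_mul_left n (by omega))
    · have hinj : Set.InjOn (fun p : Fin n × Fin n => p.1.1 + n * p.2.1) ↑(A ×ˢ B) := by
        intro p _ r _ h
        simp only at h
        have h1 : p.1.1 < n := p.1.isLt
        have h2 : r.1.1 < n := r.1.isLt
        have hmod : p.1.1 = r.1.1 := by
          have := congrArg (· % n) h
          simpa [Nat.add_mul_mod_self_left, Nat.mod_eq_of_lt h1, Nat.mod_eq_of_lt h2] using this
        have hsnd : p.2.1 = r.2.1 := by
          have : n * p.2.1 = n * r.2.1 := by omega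
          exact Nat.eq_of_mul_eq_mul_left hn0 this
        exact Prod.ext (Fin.ext hmod) (Fin.ext hsnd)
      rw [card_image_of_injOn hinj, card_product]
      have hst1 : 1 ≤ s * t := Nat.mul_pos (by omega) (by omega)
      rcases hAB with ⟨h1, h2⟩ | ⟨h1, h2⟩ <;> rw [h1, h2]
      · omega
      · rw [Nat.mul_comm]; omega
  have hmem : rBip n s t q ∈ {k : ℕ | ∃ c : Fin n → Fin n → ℕ,
      (∀ a b, c a b < k) ∧
      ∀ A B : Finset (Fin n),
        (A.card = s ∧ B.card = t) ∨ (A.card = t ∧ B.card = s) →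
        q ≤ ((A ×ˢ B).image fun p => c p.1 p.2).card} := by
    rw [rBip]
    exact Nat.sInf_mem hne
  obtain ⟨c, hck, hcol⟩ := hmem
  set R := rBip n s t q with hRdef
  have hR : n ≤ (t - 1) * R ^ a := key n R hn' c hck hcol
  have hr : (n : ℝ) ≤ ((t : ℝ) - 1) * (R : ℝ) ^ a := by
    have h2 : ((n : ℕ) : ℝ) ≤ (((t - 1) * R ^ a : ℕ) : ℝ) := Nat.cast_le.mpr hR
    rwa [Nat.cast_mul, Nat.cast_pow, Nat.cast_sub (by omega), Nat.cast_one] at h2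
  have ht1 : (0 : ℝ) < (t : ℝ) - 1 := by
    have : (2 : ℝ) ≤ (t : ℝ) := by exact_mod_cast ht2
    linarith
  have hx : (n : ℝ) / ((t : ℝ) - 1) ≤ (R : ℝ) ^ a :=
    (div_le_iff₀ ht1).mpr (by linarith [hr])
  have hx0 : (0 : ℝ) ≤ (n : ℝ) / ((t : ℝ) - 1) := div_nonneg (Nat.cast_nonneg n) ht1.le
  have ha0 : ((a : ℝ)) ≠ 0 := Nat.cast_ne_zero.mpr (by omega)
  calc ((n : ℝ) / ((t : ℝ) - 1)) ^ ((1 : ℝ) / (a : ℝ))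
      ≤ ((R : ℝ) ^ a) ^ ((1 : ℝ) / (a : ℝ)) :=
        Real.rpow_le_rpow hx0 hx (by positivity)
    _ = (R : ℝ) := by
        rw [← Real.rpow_natCast (R : ℝ) a, ← Real.rpow_mul (Nat.cast_nonneg R),
          mul_one_div, div_self ha0, Real.rpow_one]

theorem stmt_17 (s t a : ℕ) (ha : 2 ≤ a) (has : a ≤ s) (hst : s ≤ t)
    (hprod : 1 ≤ a * (s + t - a - 2)) :
    ∃ n₀ : ℕ, ∀ n : ℕ, n₀ ≤ n →
      ((n : ℝ) / ((t : ℝ) - 1)) ^ ((1 : ℝ) / (a : ℝ)) ≤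
        (rBip n s t (s * t - a * (s + t - a - 2) + 1) : ℝ) :=
  stmt_17' s t a ha has hst hprod
    (fun n k hn c hck hcol => key s t a n k ha has hst hn c hck hcol)
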